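/- Let G=(V,E) be a finite simple undirected graph and let x : E → ℝ≥0. Then there exists y : E → ℝ≥0 such that ∑_{e ∈ δ(v)} y_e = ∑_{e ∈ δ(v)} x_e for every vertex v ∈ V and the support of y has cardinality at most |V|, i.e., |{ e ∈ E : y_e > 0 }| ≤ |V|. -/

import Mathlib

open scoped Classical
open Finset

/-- Conic Carathéodory: any nonnegative combination of vectors indexed by a finset `s`
can be rewritten as a nonnegative combination whose support has size at most the finrank. -/
lemma cone_carath {ι M : Type*} [AddCommGroup M] [Module ℝ M] [FiniteDimensional ℝ M]
    (s : Finset ι) (v : ι → M) :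
    ∀ (n : ℕ) (x : ι → ℝ), (s.filter (fun i => 0 < x i)).card ≤ n →
      (∀ i ∈ s, 0 ≤ x i) →
      ∃ y : ι → ℝ, (∀ i ∈ s, 0 ≤ y i) ∧
        (∑ i ∈ s, y i • v i = ∑ i ∈ s, x i • v i) ∧
        (s.filter (fun i => 0 < y i)).card ≤ Module.finrank ℝ M := by
  intro n
  induction n with
  | zero =>
    intro x hcard hx
    exact ⟨x, hx, rfl, le_trans hcard (Nat.zero_le _)⟩
  | succ n ih =>
    intro x hcard hx
    set t := s.filter (fun i => 0 < x i) with ht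
    have hts : t ⊆ s := Finset.filter_subset _ _
    by_cases hli : LinearIndependent ℝ (fun i : {i // i ∈ t} => v (i : ι))
    · refine ⟨x, hx, rfl, ?_⟩
      have := hli.fintype_card_le_finrank
      simpa [Fintype.card_coe] using this
    · -- extract a nontrivial relation with a positive coefficient
      rw [Fintype.not_linearIndependent_iff] at hli
      obtain ⟨g, hg, j, hj⟩ := hli
      have hex : ∃ c : ι → ℝ, (∀ i, i ∉ t → c i = 0) ∧ (∑ i ∈ t, c i • v i = 0) ∧
          ∃ i ∈ t, 0 < c i := by
        set c : ι → ℝ := fun i => if h : i ∈ t then g ⟨i, h⟩ else 0 with hc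
        have hzero : ∀ i, i ∉ t → c i = 0 := fun i hi => dif_neg hi
        have hsum : ∑ i ∈ t, c i • v i = 0 := by
          rw [← Finset.sum_coe_sort t (fun i => c i • v i)]
          have : ∀ i : {i // i ∈ t}, c (i : ι) = g i := fun i => dif_pos i.2
          calc ∑ i : {i // i ∈ t}, c (i : ι) • v (i : ι)
              = ∑ i : {i // i ∈ t}, g i • v (i : ι) := by
                exact Finset.sum_congr rfl (fun i _ => by rw [this i])
            _ = 0 := hg
        by_cases hpos : ∃ i ∈ t, 0 < c i
        · exact ⟨c, hzero, hsum, hpos⟩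
        · push_neg at hpos
          have hcj : c (j : ι) = g j := dif_pos j.2
          have hjneg : c (j : ι) < 0 := by
            have := hpos (j : ι) j.2
            have hne : c (j : ι) ≠ 0 := by rw [hcj]; exact hj
            exact lt_of_le_of_ne this hne
          refine ⟨-c, fun i hi => by simp [hzero i hi], ?_, (j : ι), j.2, by
            simpa using hjneg⟩
          simp only [Pi.neg_apply, neg_smul, Finset.sum_neg_distrib]
          rw [hsum]; simp
      obtain ⟨c, hc0, hcsum, i₁, hi₁t, hci₁⟩ := hex
      -- minimize x i / c i over positive coefficients
      set T := t.filter (fun i => 0 < c i) with hT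
      have hTne : T.Nonempty := ⟨i₁, Finset.mem_filter.2 ⟨hi₁t, hci₁⟩⟩
      obtain ⟨i₀, hi₀T, hmin⟩ := T.exists_min_image (fun i => x i / c i) hTne
      have hi₀t : i₀ ∈ t := (Finset.mem_filter.1 hi₀T).1
      have hc₀ : 0 < c i₀ := (Finset.mem_filter.1 hi₀T).2
      have hx₀ : 0 < x i₀ := (Finset.mem_filter.1 hi₀t).2
      set τ := x i₀ / c i₀ with hτ
      have hτ0 : 0 ≤ τ := div_nonneg hx₀.le hc₀.le
      set x' : ι → ℝ := fun i => x i - τ * c i with hx'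
      have hx'nonneg : ∀ i ∈ s, 0 ≤ x' i := by
        intro i hi
        by_cases hci : 0 < c i
        · have hit : i ∈ t := by
            by_contra h
            rw [hc0 i h] at hci; exact lt_irrefl 0 hci
          have h1 : τ ≤ x i / c i := hmin i (Finset.mem_filter.2 ⟨hit, hci⟩)
          have h2 : τ * c i ≤ x i := (le_div_iff₀ hci).1 h1
          simp only [hx']; linarith
        · push_neg at hci
          have h1 : τ * c i ≤ 0 := mul_nonpos_of_nonneg_of_nonpos hτ0 hci
          have h2 : 0 ≤ x i := hx i hi
          simp only [hx']; linarith
      have hx'sum : ∑ i ∈ s, x' i • v i = ∑ i ∈ s, x i • v i := by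
        have hcs : ∑ i ∈ s, c i • v i = 0 := by
          rw [← Finset.sum_subset hts (fun i _ hi => by rw [hc0 i hi, zero_smul])]
          exact hcsum
        have : ∑ i ∈ s, x' i • v i
            = ∑ i ∈ s, x i • v i - τ • ∑ i ∈ s, c i • v i := by
          rw [Finset.smul_sum, ← Finset.sum_sub_distrib]
          refine Finset.sum_congr rfl (fun i _ => ?_)
          simp only [hx', sub_smul, smul_smul]
        rw [this, hcs, smul_zero, sub_zero]
      have hx'i₀ : x' i₀ = 0 := by
        simp only [hx', hτ]
        rw [div_mul_cancel₀ _ (ne_of_gt hc₀)]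
        ring
      have hsub : s.filter (fun i => 0 < x' i) ⊆ t.erase i₀ := by
        intro i hi
        obtain ⟨his, hpos⟩ := Finset.mem_filter.1 hi
        have hit : i ∈ t := by
          by_contra h
          have h1 : c i = 0 := hc0 i h
          have h2 : ¬ 0 < x i := fun hh => h (Finset.mem_filter.2 ⟨his, hh⟩)
          have h3 : x i = 0 := le_antisymm (not_lt.1 h2) (hx i his)
          have : x' i = 0 := by simp [hx', h1, h3]
          rw [this] at hpos; exact lt_irrefl 0 hpos
        have hne : i ≠ i₀ := by
          intro h
          rw [h, hx'i₀] at hpos; exact lt_irrefl 0 hpos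
        exact Finset.mem_erase.2 ⟨hne, hit⟩
      have hcard' : (s.filter (fun i => 0 < x' i)).card ≤ n := by
        have h1 := Finset.card_le_card hsub
        have h2 := Finset.card_erase_of_mem hi₀t
        have h3 : 1 ≤ t.card := Finset.card_pos.2 ⟨i₀, hi₀t⟩
        omega
      obtain ⟨y, hy0, hysum, hycard⟩ := ih x' hcard' hx'nonneg
      exact ⟨y, hy0, by rw [hysum, hx'sum], hycard⟩

/-- For any finite simple graph `G = (V,E)` and any `x : E → ℝ≥0`
there exists `y : E → ℝ≥0` with the same vertex-degree sums,
`y(δ(v)) = x(δ(v))` for every vertex `v`, whose support has size at most `|V|`. -/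
theorem stmt_2 {V : Type} [Fintype V] [DecidableEq V]
    (G : SimpleGraph V) [DecidableRel G.Adj]
    (x : Sym2 V → ℝ) (hx : ∀ e ∈ G.edgeFinset, 0 ≤ x e) :
    ∃ y : Sym2 V → ℝ, (∀ e ∈ G.edgeFinset, 0 ≤ y e) ∧
      (∀ v : V, ∑ e ∈ G.edgeFinset.filter (fun e => v ∈ e), y e
          = ∑ e ∈ G.edgeFinset.filter (fun e => v ∈ e), x e) ∧
      (G.edgeFinset.filter (fun e => 0 < y e)).card ≤ Fintype.card V := by
  obtain ⟨y, hy0, hsum, hcard⟩ := cone_carath G.edgeFinset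
    (fun e (w : V) => if w ∈ e then (1 : ℝ) else 0)
    (G.edgeFinset.filter (fun e => 0 < x e)).card x le_rfl hx
  refine ⟨y, hy0, ?_, ?_⟩
  · intro w
    have h := congrFun hsum w
    simp only [Finset.sum_apply, Pi.smul_apply, smul_eq_mul, mul_ite, mul_one, mul_zero] at h
    rw [Finset.sum_filter, Finset.sum_filter]
    exact h
  · have : Module.finrank ℝ (V → ℝ) = Fintype.card V := by
      simp [Module.finrank_pi]
    rwa [this] at hcard
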